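/- For every polynomial p(x) = 1 + p₁x + ⋯ + p_m x^m ∈ K[x] with constant term 1, writing p(c) := 1 + p₁c + ⋯ + p_m c^m ∈ A, the image of J under right multiplication by p(c) equals J; that is, {a·p(c) : a ∈ J} = J. -/

import Mathlib

open scoped Polynomial

noncomputable section

/-- The relation `X * Y = 1` defining the Jacobson algebra. -/
def JacRel (K : Type) [Field K] : FreeAlgebra K (Fin 2) → FreeAlgebra K (Fin 2) → Prop :=
  fun a b => a = FreeAlgebra.ι K (0 : Fin 2) * FreeAlgebra.ι K (1 : Fin 2) ∧ b = 1

/-- The Jacobson algebra `K⟨X, Y ∣ XY = 1⟩`. -/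
abbrev Jac (K : Type) [Field K] := RingQuot (JacRel K)

variable (K : Type) [Field K]

/-- The generator `X`. -/
def Xg : Jac K := RingQuot.mkAlgHom K (JacRel K) (FreeAlgebra.ι K 0)
/-- The generator `Y`. -/
def Yg : Jac K := RingQuot.mkAlgHom K (JacRel K) (FreeAlgebra.ι K 1)

/-- `c = Y²X`. -/
def cE : Jac K := Yg K ^ 2 * Xg K
/-- `w = 1 - YX`. -/
def wE : Jac K := 1 - Yg K * Xg K

/-- The two-sided ideal of the Jacobson algebra generated by `w = 1 - YX`. -/
def JacJ : TwoSidedIdeal (Jac K) := TwoSidedIdeal.span {wE K}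

lemma hXY : Xg K * Yg K = 1 := by
  have h := RingQuot.mkAlgHom_rel K (s := JacRel K)
    (x := FreeAlgebra.ι K (0 : Fin 2) * FreeAlgebra.ι K (1 : Fin 2)) (y := 1) ⟨rfl, rfl⟩
  simpa [Xg, Yg, map_mul, map_one] using h

lemma hXY1 (z : Jac K) : Xg K * (Yg K * z) = z := by
  rw [← mul_assoc, hXY, one_mul]

lemma hwY : wE K * Yg K = 0 := by
  rw [wE, sub_mul, one_mul, mul_assoc, hXY, mul_one, sub_self]

lemma Ymono {b : Jac K} {n : ℕ} (h : b * Yg K ^ n = 0) {m : ℕ} (hm : n ≤ m) :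
    b * Yg K ^ m = 0 := by
  obtain ⟨k, rfl⟩ := Nat.exists_eq_add_of_le hm
  rw [pow_add, ← mul_assoc, h, zero_mul]

lemma lemZ (y : Jac K) : ∀ b : Jac K, (∃ n, b * Yg K ^ n = 0) → ∃ m, b * y * Yg K ^ m = 0 := by
  obtain ⟨f, rfl⟩ := RingQuot.mkAlgHom_surjective K (JacRel K) y
  induction f using FreeAlgebra.induction with
  | grade0 r =>
    rintro b ⟨n, hn⟩
    refine ⟨n, ?_⟩
    rw [AlgHom.commutes, ← Algebra.commutes r b, mul_assoc, hn, mul_zero]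
  | grade1 i =>
    rintro b ⟨n, hn⟩
    fin_cases i
    · -- X
      refine ⟨n + 1, ?_⟩
      show b * Xg K * Yg K ^ (n + 1) = 0
      rw [pow_succ', mul_assoc, hXY1, hn]
    · -- Y
      refine ⟨n, ?_⟩
      show b * Yg K * Yg K ^ n = 0
      rw [mul_assoc, ← pow_succ', Ymono K hn (Nat.le_succ n)]
  | mul f g hf hg =>
    rintro b hb
    obtain ⟨m, hm⟩ := hg (b * RingQuot.mkAlgHom K (JacRel K) f) (hf b hb)
    exact ⟨m, by rw [map_mul, ← mul_assoc]; exact hm⟩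
  | add f g hf hg =>
    rintro b hb
    obtain ⟨m1, h1⟩ := hf b hb
    obtain ⟨m2, h2⟩ := hg b hb
    refine ⟨max m1 m2, ?_⟩
    rw [map_add, mul_add, add_mul, Ymono K h1 (le_max_left _ _),
      Ymono K h2 (le_max_right _ _), add_zero]

lemma lemA {b : Jac K} (hb : b ∈ JacJ K) : ∃ n, b * Yg K ^ n = 0 := by
  rw [JacJ, TwoSidedIdeal.mem_span_iff_mem_addSubgroup_closure] at hb
  induction hb using AddSubgroup.closure_induction with
  | mem x hx =>
    obtain ⟨z, ⟨a, -, r, hr, rfl⟩, v, -, rfl⟩ := hx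
    rw [Set.mem_singleton_iff] at hr
    subst hr
    obtain ⟨m, hm⟩ := lemZ K v (wE K) ⟨1, by rw [pow_one, hwY]⟩
    refine ⟨m, ?_⟩
    show a * wE K * v * Yg K ^ m = 0
    rw [mul_assoc a, mul_assoc a, hm, mul_zero]
  | zero => exact ⟨0, by simp⟩
  | add x y _ _ hx hy =>
    obtain ⟨m1, h1⟩ := hx
    obtain ⟨m2, h2⟩ := hy
    exact ⟨max m1 m2, by rw [add_mul, Ymono K h1 (le_max_left _ _),
      Ymono K h2 (le_max_right _ _), add_zero]⟩
  | neg x _ hx =>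
    obtain ⟨m, hm⟩ := hx
    exact ⟨m, (neg_mul x _).trans (by rw [hm, neg_zero])⟩

lemma cE_pow (n : ℕ) : cE K ^ (n + 1) = Yg K ^ (n + 1) * (Yg K * Xg K) := by
  induction n with
  | zero => simp only [zero_add, pow_one, cE, sq, mul_assoc]
  | succ n ih =>
    rw [pow_succ, ih, cE, sq]
    simp only [pow_succ, mul_assoc, hXY1]

/-- For every polynomial `p` with constant term `1`, right multiplication by
`p(c)` maps the two-sided ideal `J = ⟨w⟩` onto itself: `{a * p(c) : a ∈ J} = J`. -/
theorem stmt0 (p : Polynomial K) (hp : p.coeff 0 = 1) :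
    (fun a : Jac K => a * Polynomial.aeval (cE K) p) '' (JacJ K : Set (Jac K)) =
      (JacJ K : Set (Jac K)) := by
  ext b
  simp only [Set.mem_image, SetLike.mem_coe]
  constructor
  · rintro ⟨a, ha, rfl⟩
    exact (JacJ K).mul_mem_right _ _ ha
  · intro hb
    set t : Polynomial K := 1 - p with ht
    have htd : t = Polynomial.X * (-p.divX) := by
      have h2 := Polynomial.X_mul_divX_add p
      rw [hp, map_one] at h2
      rw [ht]; linear_combination h2
    obtain ⟨n0, hn0⟩ := lemA K hb
    set N : ℕ := n0 + 1 with hN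
    have hbc : b * cE K ^ N = 0 := by
      rw [hN, cE_pow, ← mul_assoc, Ymono K hn0 (Nat.le_succ n0), zero_mul]
    have hbt : b * Polynomial.aeval (cE K) (t ^ N) = 0 := by
      have h3 : t ^ N = Polynomial.X ^ N * (-p.divX) ^ N := by rw [htd]; ring
      rw [h3, map_mul, map_pow, Polynomial.aeval_X, ← mul_assoc, hbc, zero_mul]
    have hgeom : (∑ k ∈ Finset.range N, t ^ k) * p = 1 - t ^ N := by
      have h4 : p = 1 - t := by rw [ht]; ring
      rw [h4]; linear_combination -(geom_sum_mul t N)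
    refine ⟨b * Polynomial.aeval (cE K) (∑ k ∈ Finset.range N, t ^ k),
      (JacJ K).mul_mem_right _ _ hb, ?_⟩
    show b * Polynomial.aeval (cE K) (∑ k ∈ Finset.range N, t ^ k)
        * Polynomial.aeval (cE K) p = b
    rw [mul_assoc, ← map_mul, hgeom, map_sub, map_one, mul_sub, mul_one, hbt, sub_zero]
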